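/- Let F : X × Y → ℝ ∪ {+∞} be such that dom F(·, 0_Y) ≠ ∅ and set p := F(·, 0_Y). Then for each x* ∈ X*, the fundamental perturbational duality formula inf_{x∈X} {F(x, 0_Y) − ⟨x*, x⟩} = sup_{y*∈Y*} −F*(x*, y*) holds if and only if (M^ε p)(x*) = 𝒜^ε(x*) for all ε ≥ 0, and also if and only if there exists ε̄ > 0 with (M^ε p)(x*) = 𝒜^ε(x*) for all ε ∈ (0, ε̄), where 𝒜^ε(x*) := ⋂_{η>0} ⋃_{y*∈Y*} {x ∈ X : (x, 0_Y) ∈ (M^{ε+η}F)(x*, y*)}. -/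

import Mathlib

noncomputable section

namespace RobustDuality

/-- The set of `ε`-minimizers of an extended-real-valued function `h`:
`{z | h z ∈ ℝ ∧ h z ≤ inf h + ε}` (empty when `inf h ∉ ℝ`). -/
def epsArgmin {Z : Type*} (h : Z → EReal) (ε : ℝ) : Set Z :=
  {z | (∃ r : ℝ, h z = (r : EReal)) ∧ h z ≤ (⨅ w, h w) + (ε : EReal)}

variable {X : Type*} [AddCommGroup X] [Module ℝ X] [TopologicalSpace X]
  [IsTopologicalAddGroup X] [ContinuousSMul ℝ X] [LocallyConvexSpace ℝ X] [T2Space X]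
  {Y : Type*} [AddCommGroup Y] [Module ℝ Y] [TopologicalSpace Y]
  [IsTopologicalAddGroup Y] [ContinuousSMul ℝ Y] [LocallyConvexSpace ℝ Y] [T2Space Y]

/-- `(M^ε h)(x*) := ε-argmin (h - x*)` for `h : X → EReal` and `x* ∈ X*`. -/
def M1 (h : X → EReal) (ε : ℝ) (xs : X →L[ℝ] ℝ) : Set X :=
  epsArgmin (fun x => h x - ((xs x : ℝ) : EReal)) ε

/-- Fenchel conjugate of `F : X × Y → EReal` at `(x*, y*)`. -/
def conj2 (F : X × Y → EReal) (xs : X →L[ℝ] ℝ) (ys : Y →L[ℝ] ℝ) : EReal :=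
  ⨆ z : X × Y, ((xs z.1 + ys z.2 : ℝ) : EReal) - F z

/-- `(M^ε F)(x*, y*) := ε-argmin (F - (x*, y*))`. -/
def M2 (F : X × Y → EReal) (ε : ℝ) (xs : X →L[ℝ] ℝ) (ys : Y →L[ℝ] ℝ) : Set (X × Y) :=
  epsArgmin (fun z => F z - ((xs z.1 + ys z.2 : ℝ) : EReal)) ε

/-- `𝒜^ε(x*) := ⋂_{η>0} ⋃_{y*} {x : (x, 0) ∈ (M^{ε+η}F)(x*, y*)}`. -/
def calA1 (F : X × Y → EReal) (ε : ℝ) (xs : X →L[ℝ] ℝ) : Set X :=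
  ⋂ (η : ℝ) (_ : 0 < η),
    ⋃ ys : Y →L[ℝ] ℝ, {x : X | (x, (0 : Y)) ∈ M2 F (ε + η) xs ys}

lemma ereal_neg_iSup {ι : Sort*} (f : ι → EReal) : -⨆ i, f i = ⨅ i, -f i := by
  apply le_antisymm
  · exact le_iInf fun i => EReal.neg_le_neg_iff.2 (le_iSup f i)
  · exact EReal.le_neg_of_le_neg (iSup_le fun i => EReal.le_neg_of_le_neg (iInf_le (fun i => -f i) i))

lemma ereal_neg_coe_sub (c : ℝ) (a : EReal) (ha : a ≠ ⊥) : -((c : EReal) - a) = a - (c : EReal) := by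
  induction a using EReal.rec with
  | bot => exact absurd rfl ha
  | coe r => norm_cast; ring
  | top => simp [EReal.top_sub_coe, sub_eq_add_neg]

lemma ereal_sub_coe_ne_top {a : EReal} (ha : a ≠ ⊤) (c : ℝ) : a - (c : EReal) ≠ ⊤ := by
  induction a using EReal.rec with
  | bot => simp [EReal.bot_sub]
  | coe r => norm_cast; exact EReal.coe_ne_top _
  | top => exact absurd rfl ha

lemma ereal_sub_coe_ne_bot {a : EReal} (ha : a ≠ ⊥) (c : ℝ) : a - (c : EReal) ≠ ⊥ := by
  induction a using EReal.rec with
  | bot => exact absurd rfl ha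
  | coe r => norm_cast; exact EReal.coe_ne_bot _
  | top => simp [EReal.top_sub_coe]

lemma ereal_le_of_forall_add (a b : EReal) (h : ∀ η : ℝ, 0 < η → a ≤ b + (η : EReal)) : a ≤ b := by
  induction b using EReal.rec with
  | bot => simpa using h 1 one_pos
  | coe r =>
    rw [← EReal.le_of_forall_lt_iff_le]
    intro z hz
    have hη : (0:ℝ) < z - r := by exact_mod_cast sub_pos.2 (by exact_mod_cast hz)
    have := h (z - r) hη
    rwa [show ((r:ℝ):EReal) + ((z - r : ℝ):EReal) = (z:EReal) by norm_cast; ring] at this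
  | top => exact le_top

/-- Corollary 3.1 (robust duality for Case 1: no uncertainty). -/
theorem perturbational_duality_iff_M_eq_calA
    (F : X × Y → EReal) (hF : ∀ z, F z ≠ ⊥)
    (hdom : ∃ x : X, F (x, (0 : Y)) ≠ ⊤) (xs : X →L[ℝ] ℝ) :
    List.TFAE
      [(⨅ x : X, (F (x, (0 : Y)) - ((xs x : ℝ) : EReal))) =
         ⨆ ys : Y →L[ℝ] ℝ, -conj2 F xs ys,
       ∀ ε : ℝ, 0 ≤ ε → M1 (fun x => F (x, (0 : Y))) ε xs = calA1 F ε xs,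
       ∃ εbar : ℝ, 0 < εbar ∧ ∀ ε : ℝ, 0 < ε → ε < εbar →
         M1 (fun x => F (x, (0 : Y))) ε xs = calA1 F ε xs] := by
  classical
  obtain ⟨x₀, hx₀⟩ := hdom
  set h : X → EReal := fun x => F (x, (0 : Y)) - ((xs x : ℝ) : EReal) with hh
  set α : EReal := ⨅ x, h x with hα
  set g : (Y →L[ℝ] ℝ) → X × Y → EReal :=
    fun ys z => F z - ((xs z.1 + ys z.2 : ℝ) : EReal) with hgdef
  have hgy0 : ∀ ys x, g ys (x, (0 : Y)) = h x := by
    intro ys x; simp [hgdef, hh]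
  have hneg : ∀ ys, -conj2 F xs ys = ⨅ z, g ys z := by
    intro ys
    rw [conj2, ereal_neg_iSup]
    exact iInf_congr fun z => ereal_neg_coe_sub _ _ (hF z)
  have hweak : ∀ ys, (⨅ z, g ys z) ≤ α :=
    fun ys => le_iInf fun x => iInf_le_of_le (x, (0 : Y)) (le_of_eq (hgy0 ys x))
  set β : EReal := ⨆ ys, ⨅ z, g ys z with hβ
  have hβα : β ≤ α := iSup_le hweak
  have hhne : ∀ x, h x ≠ ⊥ := fun x => ereal_sub_coe_ne_bot (hF _) _
  have hx0real : ∃ r : ℝ, h x₀ = (r : EReal) := by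
    have : h x₀ ≠ ⊤ := ereal_sub_coe_ne_top hx₀ _
    exact ⟨(h x₀).toReal, (EReal.coe_toReal this (hhne x₀)).symm⟩
  have hαtop : α ≠ ⊤ := by
    obtain ⟨r, hr⟩ := hx0real
    intro htop
    have := iInf_le h x₀
    rw [← hα, htop, top_le_iff, hr] at this
    exact EReal.coe_ne_top r this
  have hM1 : ∀ (ε : ℝ) (x : X), x ∈ M1 (fun x => F (x, (0 : Y))) ε xs ↔
      (∃ r : ℝ, h x = (r : EReal)) ∧ h x ≤ α + (ε : EReal) := fun _ _ => Iff.rfl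
  have hM2 : ∀ (ε : ℝ) (ys : Y →L[ℝ] ℝ) (x : X), (x, (0 : Y)) ∈ M2 F ε xs ys ↔
      (∃ r : ℝ, h x = (r : EReal)) ∧ h x ≤ (⨅ z, g ys z) + (ε : EReal) := by
    intro ε ys x
    show ((∃ r : ℝ, g ys (x, (0:Y)) = (r : EReal)) ∧
      g ys (x, (0:Y)) ≤ (⨅ z, g ys z) + (ε : EReal)) ↔ _
    rw [hgy0]
  have hcalA : ∀ (ε : ℝ) (x : X), x ∈ calA1 F ε xs ↔
      ∀ η : ℝ, 0 < η → ∃ ys, (x, (0 : Y)) ∈ M2 F (ε + η) xs ys := by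
    intro ε x
    simp [calA1, Set.mem_iInter, Set.mem_iUnion]
  tfae_have 1 → 2 := by
    intro h1 ε hε
    have h1' : α = β := h1.trans (iSup_congr hneg)
    ext x
    constructor
    · intro hx
      obtain ⟨⟨r, hr⟩, hle⟩ := (hM1 ε x).1 hx
      have hαbot : α ≠ ⊥ := by
        intro hb
        rw [hb, EReal.bot_add, hr, le_bot_iff] at hle
        exact EReal.coe_ne_bot r hle
      obtain ⟨a, ha⟩ : ∃ a : ℝ, α = (a : EReal) :=
        ⟨α.toReal, (EReal.coe_toReal hαtop hαbot).symm⟩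
      rw [hcalA]
      intro η hη
      have hlt : ((a - η : ℝ) : EReal) < β := by
        rw [← h1', ha]
        exact_mod_cast sub_lt_self a hη
      obtain ⟨ys, hys⟩ := lt_iSup_iff.mp hlt
      refine ⟨ys, (hM2 _ ys x).2 ⟨⟨r, hr⟩, ?_⟩⟩
      calc h x ≤ α + (ε : EReal) := hle
        _ = ((a - η : ℝ) : EReal) + ((ε + η : ℝ) : EReal) := by
            rw [ha]; norm_cast; ring
        _ ≤ (⨅ z, g ys z) + ((ε + η : ℝ) : EReal) := add_le_add_left hys.le _
    · intro hx
      have hx' := (hcalA ε x).1 hx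
      obtain ⟨ys₁, hys₁⟩ := hx' 1 one_pos
      obtain ⟨hreal, _⟩ := (hM2 _ _ _).1 hys₁
      refine (hM1 ε x).2 ⟨hreal, ?_⟩
      apply ereal_le_of_forall_add
      intro η hη
      obtain ⟨ys, hys⟩ := hx' η hη
      obtain ⟨_, hle⟩ := (hM2 _ _ _).1 hys
      calc h x ≤ (⨅ z, g ys z) + ((ε + η : ℝ) : EReal) := hle
        _ ≤ α + ((ε + η : ℝ) : EReal) := add_le_add_left (hweak ys) _
        _ = α + (ε : EReal) + (η : EReal) := by rw [EReal.coe_add, ← add_assoc]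
  tfae_have 2 → 3 := by
    intro h2
    exact ⟨1, one_pos, fun ε hε _ => h2 ε hε.le⟩
  tfae_have 3 → 1 := by
    rintro ⟨εbar, hεbar, h3⟩
    rw [iSup_congr hneg]
    refine le_antisymm ?_ hβα
    by_cases hαbot : α = ⊥
    · rw [hαbot]; exact bot_le
    obtain ⟨a, ha⟩ : ∃ a : ℝ, α = (a : EReal) :=
      ⟨α.toReal, (EReal.coe_toReal hαtop hαbot).symm⟩
    apply ereal_le_of_forall_add
    intro η hη
    set ε : ℝ := min (εbar / 2) (η / 3) with hεdef
    have hε0 : 0 < ε := lt_min (by positivity) (by positivity)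
    have hεlt : ε < εbar := (min_le_left _ _).trans_lt (by linarith)
    have hlt : α < ((a + ε : ℝ) : EReal) := by
      rw [ha]; exact_mod_cast lt_add_of_pos_right a hε0
    obtain ⟨x, hx⟩ := iInf_lt_iff.mp hlt
    have hxtop : h x ≠ ⊤ := fun ht => by
      rw [ht] at hx; exact absurd hx (not_lt.2 le_top)
    have hxreal : ∃ r : ℝ, h x = (r : EReal) :=
      ⟨(h x).toReal, (EReal.coe_toReal hxtop (hhne x)).symm⟩
    have hxM : x ∈ M1 (fun x => F (x, (0 : Y))) ε xs := by
      refine (hM1 ε x).2 ⟨hxreal, ?_⟩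
      rw [ha, ← EReal.coe_add]
      exact hx.le
    rw [h3 ε hε0 hεlt] at hxM
    obtain ⟨ys, hys⟩ := (hcalA ε x).1 hxM (η / 3) (by positivity)
    obtain ⟨_, hle⟩ := (hM2 _ _ _).1 hys
    calc α ≤ h x := iInf_le h x
      _ ≤ (⨅ z, g ys z) + ((ε + η / 3 : ℝ) : EReal) := hle
      _ ≤ β + ((ε + η / 3 : ℝ) : EReal) := add_le_add_left (le_iSup (fun ys => ⨅ z, g ys z) ys) _
      _ ≤ β + (η : EReal) := by
          refine add_le_add_right ?_ β
          have : ε + η / 3 ≤ η := by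
            have := min_le_right (εbar / 2) (η / 3)
            linarith [hεdef ▸ this]
          exact_mod_cast this
  tfae_finish

end RobustDuality
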